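/- Let F be a field and D a division ring that is an F-algebra with F contained in the center of D. Assume D is pure quantum, i.e. there exist no elements u, v ∈ D with u*v − v*u = 1. Let x ∈ D be nonzero and let Ad_x : D → D be the F-linear map Ad_x(y) = x y x^{−1}. If W is a finite-dimensional F-subspace of D that is invariant under Ad_x and the minimal polynomial of the restriction of Ad_x to W splits into linear factors over F, then the restriction of Ad_x to W is diagonalizable: W is the (direct) sum of the eigenspaces of Ad_x restricted to W; equivalently, W has an F-basis consisting of eigenvectors of Ad_x. -/

import Mathlib

open Polynomial Module

section Aux

variable {F D : Type*} [Field F] [DivisionRing D] [Algebra F D]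

/-- Pure quantum contradiction: no chain `x w x⁻¹ = μ w + w'`, `x w' x⁻¹ = μ w'` with `w' ≠ 0`. -/
lemma pq_aux (hpq : ¬ ∃ u v : D, u * v - v * u = 1) (x : D) (hx : x ≠ 0) (μ : F)
    {w w' : D} (hw' : w' ≠ 0)
    (h1 : x * w * x⁻¹ = μ • w + w') (h2 : x * w' * x⁻¹ = μ • w') : False := by
  set a := algebraMap F D μ with ha_def
  have hsmul : ∀ z : D, μ • z = a * z := fun z => Algebra.smul_def μ z
  have hxx : x⁻¹ * x = 1 := inv_mul_cancel₀ hx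
  have hxx' : x * x⁻¹ = 1 := mul_inv_cancel₀ hx
  have hcomm : ∀ z : D, a * z = z * a := fun z => Algebra.commutes μ z
  have ha : a ≠ 0 := by
    intro h
    apply hw'
    have h2' : x * w' * x⁻¹ = 0 := by rw [h2, hsmul, h, zero_mul]
    have : x⁻¹ * (x * w' * x⁻¹) * x = x⁻¹ * 0 * x := by rw [h2']
    simpa [mul_assoc, inv_mul_cancel_left₀ hx, hxx] using this
  have hcomm' : ∀ z : D, a⁻¹ * z = z * a⁻¹ := by
    intro z
    have : Commute a z := hcomm z
    exact this.inv_left₀.eq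
  have h2' : x * w' = a * (w' * x) := by
    have := congrArg (· * x) h2
    simpa [hsmul, mul_assoc, hxx] using this
  have h1' : x * w = a * (w * x) + w' * x := by
    have := congrArg (· * x) h1
    simpa [hsmul, mul_assoc, hxx, add_mul] using this
  have hw'x : x * w'⁻¹ = a⁻¹ * (w'⁻¹ * x) := by
    have hinv : w'⁻¹ * x⁻¹ = x⁻¹ * (w'⁻¹ * a⁻¹) := by
      have := congrArg Inv.inv h2'
      simpa [mul_inv_rev, mul_assoc] using this
    have := congrArg (fun z => x * z * x) hinv
    simp only [mul_assoc, hxx] at this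
    simp only [mul_one] at this
    rw [← mul_assoc x x⁻¹, hxx', one_mul] at this
    rw [this, ← mul_assoc, ← hcomm' w'⁻¹, mul_assoc]
  set t := w'⁻¹ * w with ht
  have key3 : x * t = t * x + a⁻¹ * x := by
    calc x * (w'⁻¹ * w) = (x * w'⁻¹) * w := by rw [mul_assoc]
    _ = a⁻¹ * (w'⁻¹ * (x * w)) := by rw [hw'x]; simp [mul_assoc]
    _ = a⁻¹ * (w'⁻¹ * (a * (w * x) + w' * x)) := by rw [h1']
    _ = a⁻¹ * (a * (w'⁻¹ * (w * x))) + a⁻¹ * (w'⁻¹ * (w' * x)) := by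
          rw [mul_add w'⁻¹, ← mul_assoc w'⁻¹ a, ← hcomm w'⁻¹, mul_assoc a, mul_add a⁻¹]
    _ = t * x + a⁻¹ * x := by
          rw [← mul_assoc a⁻¹ a, inv_mul_cancel₀ ha, one_mul,
            ← mul_assoc w'⁻¹ w', inv_mul_cancel₀ hw', one_mul, ht, mul_assoc]
  apply hpq
  refine ⟨x, a * (x⁻¹ * t), ?_⟩
  have e1 : x * (a * (x⁻¹ * t)) = a * t := by
    rw [← mul_assoc, ← hcomm x, mul_assoc, ← mul_assoc x, hxx', one_mul]
  have e2 : (a * (x⁻¹ * t)) * x = a * t - 1 := by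
    have htx : t * x = x * t - a⁻¹ * x := by rw [key3, add_sub_cancel_right]
    calc (a * (x⁻¹ * t)) * x = a * (x⁻¹ * (t * x)) := by simp [mul_assoc]
    _ = a * (x⁻¹ * (x * t - a⁻¹ * x)) := by rw [htx]
    _ = a * (x⁻¹ * (x * t)) - a * (x⁻¹ * (a⁻¹ * x)) := by rw [mul_sub, mul_sub]
    _ = a * t - 1 := by
          rw [← mul_assoc x⁻¹ x, hxx, one_mul, hcomm' x, ← mul_assoc x⁻¹ x,
            hxx, one_mul, mul_inv_cancel₀ ha]
  rw [e1, e2, sub_sub_cancel]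

lemma ker_prod_le {F V : Type*} [Field F] [AddCommGroup V] [Module F V]
    (g : Module.End F V) (s : Finset F) :
    LinearMap.ker (Polynomial.aeval g (∏ μ ∈ s, (X - C μ))) ≤
      ⨆ μ : F, Module.End.eigenspace g μ := by
  classical
  induction s using Finset.induction_on with
  | empty => simp [Module.End.one_eq_id]
  | @insert μ s hμs ih =>
    rw [Finset.prod_insert hμs]
    have hco : IsCoprime (X - C μ : F[X]) (∏ ν ∈ s, (X - C ν)) :=
      IsCoprime.prod_right fun ν hν =>
        pairwise_coprime_X_sub_C (Function.injective_id)
          (by rintro rfl; exact hμs hν)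
    rw [← sup_ker_aeval_eq_ker_aeval_mul_of_coprime g hco]
    apply sup_le _ ih
    refine le_trans ?_ (le_iSup _ μ)
    rw [Module.End.eigenspace_def]
    intro v hv
    simp only [LinearMap.mem_ker, map_sub, aeval_X, aeval_C, LinearMap.sub_apply,
      Module.algebraMap_end_apply] at hv ⊢
    simpa using hv

end Aux

/-- Proposition 3.3: let `D` be a pure quantum division ring over a central
subfield `F` (no `u, v ∈ D` with `u*v - v*u = 1`), `x ∈ D` nonzero, and
`Ad_x : D → D` the `F`-linear map `y ↦ x y x⁻¹`. If `W` is a finite-dimensional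
`Ad_x`-invariant `F`-subspace of `D` and the minimal polynomial of `Ad_x|_W`
splits into linear factors over `F`, then `Ad_x|_W` is diagonalizable: `W` is
the sum of the eigenspaces of `Ad_x|_W`. -/
theorem adjoint_action_diagonalizable_of_pure_quantum
    {F D : Type*} [Field F] [DivisionRing D] [Algebra F D]
    (hpq : ¬ ∃ u v : D, u * v - v * u = 1)
    (x : D) (hx : x ≠ 0)
    (f : D →ₗ[F] D) (hf : ∀ y : D, f y = x * y * x⁻¹)
    (W : Submodule F D) [FiniteDimensional F W]
    (hinv : ∀ w ∈ W, f w ∈ W)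
    (hsplit : Polynomial.Splits
      (minpoly F (LinearMap.restrict f hinv))) :
    ⨆ μ : F, Module.End.eigenspace (LinearMap.restrict f hinv) μ = ⊤ := by
  classical
  set g : Module.End F W := LinearMap.restrict f hinv with hg
  have hA : ∀ (μ : F) (v : W), (g - algebraMap F (Module.End F W) μ)
      ((g - algebraMap F (Module.End F W) μ) v) = 0 →
      (g - algebraMap F (Module.End F W) μ) v = 0 := by
    intro μ v h
    by_contra hne
    set v' : W := (g - algebraMap F (Module.End F W) μ) v with hv'
    have hw' : (v' : D) ≠ 0 := fun h0 => hne (Subtype.ext h0)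
    have hcoe : (v' : D) = f (v : D) - μ • (v : D) := by
      simp [hv', hg, LinearMap.restrict_coe_apply, Module.algebraMap_end_apply]
    have h1 : x * (v : D) * x⁻¹ = μ • (v : D) + (v' : D) := by
      rw [← hf, hcoe]; abel
    have h2 : x * (v' : D) * x⁻¹ = μ • (v' : D) := by
      rw [← hf]
      have := congrArg (Subtype.val : W → D) h
      simpa [hg, LinearMap.restrict_coe_apply, Module.algebraMap_end_apply,
        sub_eq_zero] using this
    exact pq_aux hpq x hx μ hw' h1 h2
  have hint : IsIntegral F g := Algebra.IsIntegral.isIntegral (R := F) g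
  have hm0 : minpoly F g ≠ 0 := minpoly.ne_zero hint
  have hmonic : (minpoly F g).Monic := minpoly.monic hint
  have hnodup : (minpoly F g).roots.Nodup := by
    rw [Multiset.nodup_iff_count_le_one]
    intro μ
    by_contra hc
    push_neg at hc
    have h2le : 2 ≤ rootMultiplicity μ (minpoly F g) := by
      rw [← count_roots]; omega
    have hdvd : (X - C μ) ^ 2 ∣ minpoly F g :=
      (pow_dvd_pow _ h2le).trans (pow_rootMultiplicity_dvd _ μ)
    obtain ⟨q, hq⟩ := hdvd
    have hq0 : q ≠ 0 := by rintro rfl; rw [mul_zero] at hq; exact hm0 hq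
    have hann : Polynomial.aeval g ((X - C μ) * q) = 0 := by
      ext v
      have h0 : Polynomial.aeval g (minpoly F g) v = (0 : Module.End F W) v := by
        rw [show Polynomial.aeval g (minpoly F g) = 0 from minpoly.aeval F g]
      rw [hq] at h0
      simp only [map_mul, map_pow, map_sub, aeval_X, aeval_C, Module.End.mul_apply,
        LinearMap.zero_apply, pow_two] at h0 ⊢
      exact congrArg Subtype.val (hA μ _ h0)
    have hdvd2 : minpoly F g ∣ (X - C μ) * q := minpoly.dvd F g hann
    have hne0 : (X - C μ) * q ≠ 0 := mul_ne_zero (X_sub_C_ne_zero μ) hq0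
    have hdeg := Polynomial.natDegree_le_of_dvd hdvd2 hne0
    rw [hq, natDegree_mul (pow_ne_zero _ (X_sub_C_ne_zero μ)) hq0,
      natDegree_mul (X_sub_C_ne_zero μ) hq0, natDegree_pow, natDegree_X_sub_C] at hdeg
    omega
  have hprod : minpoly F g = ((minpoly F g).roots.map fun a => X - C a).prod := by
    conv_lhs => rw [hsplit.eq_prod_roots]
    rw [hmonic.leadingCoeff, map_one, one_mul]
  have hsv : ((minpoly F g).roots.toFinset.val) = (minpoly F g).roots := by
    rw [Multiset.toFinset_val, Multiset.dedup_eq_self.mpr hnodup]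
  have hfin : (∏ μ ∈ (minpoly F g).roots.toFinset, (X - C μ)) = minpoly F g := by
    rw [Finset.prod_eq_multiset_prod, hsv, ← hprod]
  rw [← top_le_iff]
  have hker : (⊤ : Submodule F W) ≤
      LinearMap.ker (Polynomial.aeval g (∏ μ ∈ (minpoly F g).roots.toFinset, (X - C μ))) := by
    rw [hfin, show Polynomial.aeval g (minpoly F g) = 0 from minpoly.aeval F g]
    simp
  exact le_trans hker (ker_prod_le g _)
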